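/- (Pooling limits of the Bayes risk.) Suppose τ ≠ 1. If ζ·(1 − τ) > 0, then r(d) tends to π0·C00 + π1·C11 + π0·(C10 − C00) as d → 0⁺ (the risk of the receiver always declaring H1). If ζ·(1 − τ) < 0, then r(d) tends to π0·C00 + π1·C11 + π1·(C01 − C11) as d → 0⁺ (the risk of the receiver always declaring H0). -/
import Mathlib

open Filter MeasureTheory Real Set

/-- The Gaussian Q-function `Q(x) = (1/√(2π)) ∫_x^∞ exp(−t²/2) dt`. -/
noncomputable def gaussQ (x : ℝ) : ℝ :=
  (Real.sqrt (2 * Real.pi))⁻¹ * ∫ t in Set.Ioi x, Real.exp (-(t ^ 2 / 2))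

lemma gauss_integrable : Integrable (fun t : ℝ => Real.exp (-(t ^ 2 / 2))) := by
  have h := integrable_exp_neg_mul_sq (show (0:ℝ) < 1/2 by norm_num)
  refine h.congr ?_
  filter_upwards with t
  ring_nf

lemma gauss_total : ∫ t : ℝ, Real.exp (-(t ^ 2 / 2)) = Real.sqrt (2 * Real.pi) := by
  have h := integral_gaussian (1/2)
  rw [show Real.pi / (1/2) = 2 * Real.pi by ring] at h
  rw [← h]
  congr 1
  funext t
  ring_nf

lemma tail_atTop : Tendsto (fun x : ℝ => ∫ t in Set.Ioi x, Real.exp (-(t ^ 2 / 2)))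
    atTop (nhds 0) := by
  have key := tendsto_integral_filter_of_dominated_convergence
    (μ := (volume : Measure ℝ)) (l := (atTop : Filter ℝ))
    (F := fun x t => Set.indicator (Set.Ioi x) (fun t => Real.exp (-(t ^ 2 / 2))) t)
    (f := fun _ => (0:ℝ)) (bound := fun t => Real.exp (-(t ^ 2 / 2)))
    (.of_forall fun x => (gauss_integrable.aestronglyMeasurable).indicator measurableSet_Ioi)
    (.of_forall fun x => .of_forall fun t => by
      calc ‖Set.indicator (Set.Ioi x) (fun t => Real.exp (-(t ^ 2 / 2))) t‖
          ≤ ‖Real.exp (-(t ^ 2 / 2))‖ := norm_indicator_le_norm_self (fun t => Real.exp (-(t ^ 2 / 2))) t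
        _ = Real.exp (-(t ^ 2 / 2)) := by
            rw [Real.norm_eq_abs, abs_of_pos (Real.exp_pos _)])
    gauss_integrable
    (.of_forall fun t => by
      refine Tendsto.congr' ?_ tendsto_const_nhds
      filter_upwards [eventually_gt_atTop t] with x hx
      exact (Set.indicator_of_notMem (by simpa using hx.le) _).symm)
  simpa [MeasureTheory.integral_indicator measurableSet_Ioi] using key

lemma tail_atBot : Tendsto (fun x : ℝ => ∫ t in Set.Ioi x, Real.exp (-(t ^ 2 / 2)))
    atBot (nhds (Real.sqrt (2 * Real.pi))) := by
  have key := tendsto_integral_filter_of_dominated_convergence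
    (μ := (volume : Measure ℝ)) (l := (atBot : Filter ℝ))
    (F := fun x t => Set.indicator (Set.Ioi x) (fun t => Real.exp (-(t ^ 2 / 2))) t)
    (f := fun t => Real.exp (-(t ^ 2 / 2))) (bound := fun t => Real.exp (-(t ^ 2 / 2)))
    (.of_forall fun x => (gauss_integrable.aestronglyMeasurable).indicator measurableSet_Ioi)
    (.of_forall fun x => .of_forall fun t => by
      calc ‖Set.indicator (Set.Ioi x) (fun t => Real.exp (-(t ^ 2 / 2))) t‖
          ≤ ‖Real.exp (-(t ^ 2 / 2))‖ := norm_indicator_le_norm_self (fun t => Real.exp (-(t ^ 2 / 2))) t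
        _ = Real.exp (-(t ^ 2 / 2)) := by
            rw [Real.norm_eq_abs, abs_of_pos (Real.exp_pos _)])
    gauss_integrable
    (.of_forall fun t => by
      refine Tendsto.congr' ?_ tendsto_const_nhds
      filter_upwards [eventually_lt_atBot t] with x hx
      exact (Set.indicator_of_mem (Set.mem_Ioi.mpr hx) (fun t => Real.exp (-(t ^ 2 / 2)))).symm)
  rw [← gauss_total]
  simpa [MeasureTheory.integral_indicator measurableSet_Ioi] using key

lemma sqrt_two_pi_pos : 0 < Real.sqrt (2 * Real.pi) :=
  Real.sqrt_pos.2 (by positivity)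

lemma gaussQ_atTop : Tendsto gaussQ atTop (nhds 0) := by
  have h := tail_atTop.const_mul (Real.sqrt (2 * Real.pi))⁻¹
  rw [mul_zero] at h
  exact h

lemma gaussQ_atBot : Tendsto gaussQ atBot (nhds 1) := by
  have h := tail_atBot.const_mul (Real.sqrt (2 * Real.pi))⁻¹
  rw [inv_mul_cancel₀ sqrt_two_pi_pos.ne'] at h
  exact h

lemma arg_atBot {c b : ℝ} (hc : c < 0) :
    Tendsto (fun d : ℝ => c * d⁻¹ + b * d) (nhdsWithin 0 (Set.Ioi 0)) atBot := by
  have h1 : Tendsto (fun d : ℝ => c * d⁻¹) (nhdsWithin 0 (Set.Ioi 0)) atBot := by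
    have h := (tendsto_inv_nhdsGT_zero (𝕜 := ℝ)).const_mul_atTop (neg_pos.2 hc)
    rw [← tendsto_neg_atBot_iff] at h
    exact h.congr fun d => by ring
  have h2 : Tendsto (fun d : ℝ => b * d) (nhdsWithin 0 (Set.Ioi 0)) (nhds 0) :=
    ((continuous_mul_left b).tendsto' 0 0 (mul_zero b)).mono_left nhdsWithin_le_nhds
  exact h1.atBot_add h2

lemma arg_atTop {c b : ℝ} (hc : 0 < c) :
    Tendsto (fun d : ℝ => c * d⁻¹ + b * d) (nhdsWithin 0 (Set.Ioi 0)) atTop := by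
  have h1 := (tendsto_inv_nhdsGT_zero (𝕜 := ℝ)).const_mul_atTop hc
  have h2 : Tendsto (fun d : ℝ => b * d) (nhdsWithin 0 (Set.Ioi 0)) (nhds 0) :=
    ((continuous_mul_left b).tendsto' 0 0 (mul_zero b)).mono_left nhdsWithin_le_nhds
  exact h1.atTop_add h2

/-- Pooling limits of the transmitter Bayes risk as `d → 0⁺`. -/
theorem stmt_11 (π0 π1 C00 C01 C10 C11 τ ζ : ℝ)
    (hπ0 : 0 < π0) (hπ1 : 0 < π1) (hτ : 0 < τ) (hζ : ζ = 1 ∨ ζ = -1)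
    (hτ1 : τ ≠ 1)
    (r : ℝ → ℝ)
    (hr : r = fun d : ℝ => π0 * C00 + π1 * C11
        + π0 * (C10 - C00) * gaussQ (ζ * (Real.log τ / d + d / 2))
        + π1 * (C01 - C11) * gaussQ (ζ * (-Real.log τ / d + d / 2))) :
    (0 < ζ * (1 - τ) →
      Tendsto r (nhdsWithin 0 (Set.Ioi (0 : ℝ)))
        (nhds (π0 * C00 + π1 * C11 + π0 * (C10 - C00)))) ∧
    (ζ * (1 - τ) < 0 →
      Tendsto r (nhdsWithin 0 (Set.Ioi (0 : ℝ)))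
        (nhds (π0 * C00 + π1 * C11 + π1 * (C01 - C11)))) := by
  subst hr
  have harg1 : ∀ d : ℝ, ζ * (Real.log τ / d + d / 2)
      = (ζ * Real.log τ) * d⁻¹ + (ζ / 2) * d := fun d => by ring
  have harg2 : ∀ d : ℝ, ζ * (-Real.log τ / d + d / 2)
      = (-(ζ * Real.log τ)) * d⁻¹ + (ζ / 2) * d := fun d => by ring
  constructor
  · intro hsign
    -- here ζ * log τ < 0
    have hL : ζ * Real.log τ < 0 := by
      rcases hζ with h | h <;> subst h
      · simp only [one_mul] at hsign ⊢
        exact Real.log_neg hτ (by linarith)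
      · simp only [neg_one_mul, neg_neg, neg_lt, neg_pos] at hsign ⊢
        have : 1 < τ := by linarith
        simpa using Real.log_pos this
    have t1 : Tendsto (fun d : ℝ => gaussQ (ζ * (Real.log τ / d + d / 2)))
        (nhdsWithin 0 (Set.Ioi 0)) (nhds 1) := by
      refine gaussQ_atBot.comp ?_
      exact (arg_atBot (b := ζ/2) hL).congr fun d => (harg1 d).symm
    have t2 : Tendsto (fun d : ℝ => gaussQ (ζ * (-Real.log τ / d + d / 2)))
        (nhdsWithin 0 (Set.Ioi 0)) (nhds 0) := by
      refine gaussQ_atTop.comp ?_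
      exact (arg_atTop (b := ζ/2) (by linarith)).congr fun d => (harg2 d).symm
    have := ((tendsto_const_nhds.add (t1.const_mul (π0 * (C10 - C00)))).add
      (t2.const_mul (π1 * (C01 - C11)))
      : Tendsto (fun d : ℝ => (π0 * C00 + π1 * C11
          + π0 * (C10 - C00) * gaussQ (ζ * (Real.log τ / d + d / 2)))
          + π1 * (C01 - C11) * gaussQ (ζ * (-Real.log τ / d + d / 2)))
        (nhdsWithin 0 (Set.Ioi 0))
        (nhds ((π0 * C00 + π1 * C11 + π0 * (C10 - C00) * 1) + π1 * (C01 - C11) * 0)))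
    convert this using 2
    ring
  · intro hsign
    have hL : 0 < ζ * Real.log τ := by
      rcases hζ with h | h <;> subst h
      · simp only [one_mul] at hsign ⊢
        have : 1 < τ := by linarith
        exact Real.log_pos this
      · simp only [neg_one_mul, neg_neg, neg_lt, neg_pos] at hsign ⊢
        have : τ < 1 := by linarith
        simpa using Real.log_neg hτ this
    have t1 : Tendsto (fun d : ℝ => gaussQ (ζ * (Real.log τ / d + d / 2)))
        (nhdsWithin 0 (Set.Ioi 0)) (nhds 0) := by
      refine gaussQ_atTop.comp ?_
      exact (arg_atTop (b := ζ/2) hL).congr fun d => (harg1 d).symm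
    have t2 : Tendsto (fun d : ℝ => gaussQ (ζ * (-Real.log τ / d + d / 2)))
        (nhdsWithin 0 (Set.Ioi 0)) (nhds 1) := by
      refine gaussQ_atBot.comp ?_
      exact (arg_atBot (b := ζ/2) (by linarith)).congr fun d => (harg2 d).symm
    have := ((tendsto_const_nhds.add (t1.const_mul (π0 * (C10 - C00)))).add
      (t2.const_mul (π1 * (C01 - C11)))
      : Tendsto (fun d : ℝ => (π0 * C00 + π1 * C11
          + π0 * (C10 - C00) * gaussQ (ζ * (Real.log τ / d + d / 2)))
          + π1 * (C01 - C11) * gaussQ (ζ * (-Real.log τ / d + d / 2)))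
        (nhdsWithin 0 (Set.Ioi 0))
        (nhds ((π0 * C00 + π1 * C11 + π0 * (C10 - C00) * 0) + π1 * (C01 - C11) * 1)))
    convert this using 2
    ring
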